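/- Let f(x) = (k/η) ∫_0^x log(kv/(αηγ) + 1) dv for x ≥ 0, with k, η, α, γ > 0. Then the Fenchel conjugate of f restricted to [0, ∞) satisfies f*(θ) ≤ αγ (exp(ηθ/k) − ηθ/k) for all θ ≥ 0. -/

import Mathlib

lemma key_ineq (a s : ℝ) (ha : 0 < a) :
    a * s ≤ a * Real.log a - a + Real.exp s := by
  have h := Real.add_one_le_exp (s - Real.log a)
  rw [Real.exp_sub, Real.exp_log ha] at h
  have h2 := mul_le_mul_of_nonneg_left h ha.le
  rw [mul_div_cancel₀ _ (ne_of_gt ha)] at h2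
  nlinarith [h2]

lemma integral_eval (k c x : ℝ) (hk : 0 < k) (hc : 0 < c) (hx : 0 ≤ x) :
    ∫ v in (0:ℝ)..x, Real.log (k * v / c + 1)
      = (c / k + x) * Real.log (k * x / c + 1) - x := by
  have huIcc : Set.uIcc (0:ℝ) x = Set.Icc 0 x := Set.uIcc_of_le hx
  have hpos : ∀ v ∈ Set.uIcc (0:ℝ) x, 0 < k * v / c + 1 := by
    intro v hv
    rw [huIcc] at hv
    have : 0 ≤ k * v / c := div_nonneg (mul_nonneg hk.le hv.1) hc.le
    linarith
  have hderiv : ∀ v ∈ Set.uIcc (0:ℝ) x,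
      HasDerivAt (fun v => (c / k + v) * Real.log (k * v / c + 1) - v)
        (Real.log (k * v / c + 1)) v := by
    intro v hv
    have hne : k * v / c + 1 ≠ 0 := ne_of_gt (hpos v hv)
    have hinner : HasDerivAt (fun v : ℝ => k * v / c + 1) (k / c) v := by
      simpa using (((hasDerivAt_id v).const_mul k).div_const c).add_const 1
    have hlog := hinner.log hne
    have hlin : HasDerivAt (fun v : ℝ => c / k + v) 1 v := by
      simpa using (hasDerivAt_id v).const_add (c / k)
    have := (hlin.mul hlog).sub (hasDerivAt_id v)
    convert this using 1
    · rfl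
    · rfl
    · rfl
    have h3 : (c / k + v) * (k / c / (k * v / c + 1)) = 1 := by
      rw [mul_div_assoc', div_eq_one_iff_eq hne]
      field_simp; ring
    rw [h3]; ring
  have hcont : IntervalIntegrable (fun v => Real.log (k * v / c + 1))
      MeasureTheory.volume 0 x := by
    apply ContinuousOn.intervalIntegrable
    apply ContinuousOn.log
    · fun_prop
    · intro v hv; exact ne_of_gt (hpos v hv)
  have := intervalIntegral.integral_eq_sub_of_hasDerivAt hderiv hcont
  rw [this]
  simp

theorem stmt14 (k η α γ : ℝ) (hk : 0 < k) (hη : 0 < η) (hα : 0 < α) (hγ : 0 < γ) :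
    ∀ θ : ℝ, 0 ≤ θ → ∀ x : ℝ, 0 ≤ x →
      θ * x - (k / η) * ∫ v in (0:ℝ)..x, Real.log (k * v / (α * η * γ) + 1)
        ≤ α * γ * (Real.exp (η * θ / k) - η * θ / k) := by
  intro θ hθ x hx
  set c := α * η * γ with hc
  have hc0 : 0 < c := by positivity
  rw [integral_eval k c x hk hc0 hx]
  have ha : 0 < k * x / c + 1 := by positivity
  have key := key_ineq (k * x / c + 1) (η * θ / k) ha
  set L := Real.log (k * x / c + 1)
  set E := Real.exp (η * θ / k)
  -- key : (k*x/c+1) * (η*θ/k) ≤ (k*x/c+1) * L - (k*x/c+1) + E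
  have hmul := mul_le_mul_of_nonneg_left key (le_of_lt (by positivity : (0:ℝ) < c / η))
  have hA : c / η * ((k * x / c + 1) * (η * θ / k)) = θ * x + c * θ / k := by
    field_simp
  have hB : c / η * ((k * x / c + 1) * L) = k / η * ((c / k + x) * L) := by
    field_simp; ring
  have hC : c / η * (k * x / c + 1) = k * x / η + c / η := by
    field_simp
  have hD : α * γ * (E - η * θ / k) = c / η * E - c * θ / k := by
    rw [hc]; field_simp
  have hE : k / η * ((c / k + x) * L - x) = k / η * ((c / k + x) * L) - k * x / η := by
    ring
  have hexp : c / η * ((k * x / c + 1) * L - (k * x / c + 1) + E)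
      = c / η * ((k * x / c + 1) * L) - c / η * (k * x / c + 1) + c / η * E := by
    ring
  have hcη : (0:ℝ) < c / η := by positivity
  linarith
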